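/- arXiv:2110.13200 — 3 statements merged into one kernel-verified Lean document; each statement's English description precedes it below -/
import Mathlib

section
/- Suppose the Gram matrix K_S^H K_S is invertible. Then for every vector r lying in the column space of K_S and every index j ∉ S, one has |⟨k_j, r⟩| ≤ M · max_{i∈S} |⟨k_i, r⟩|, where M := max_{l∉S} ‖(K_S^H K_S)^{-1} K_S^H k_l‖₁. -/
open Matrix Finset

noncomputable section

/-- The Hermitian inner product `⟨u,v⟩ = ∑ l, conj (u l) * v l` on `ℂ^L`. -/
def ipC {L : ℕ} (u v : Fin L → ℂ) : ℂ := ∑ l, star (u l) * v l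

/-- The `j`-th column `k_j` of the dictionary `K`. -/
def col {L N : ℕ} (K : Matrix (Fin L) (Fin N) ℂ) (j : Fin N) : Fin L → ℂ := fun l => K l j

/-- The submatrix `K_S` of the columns of `K` indexed by `S`. -/
def subMat {L N : ℕ} (K : Matrix (Fin L) (Fin N) ℂ) (S : Finset (Fin N)) :
    Matrix (Fin L) {j : Fin N // j ∈ S} ℂ := Matrix.of fun l j => K l j.1

/-- The Gram matrix `K_Sᴴ K_S`. -/
def gram {L N : ℕ} (K : Matrix (Fin L) (Fin N) ℂ) (S : Finset (Fin N)) :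
    Matrix {j : Fin N // j ∈ S} {j : Fin N // j ∈ S} ℂ := (subMat K S)ᴴ * subMat K S

/-- The vector `(K_Sᴴ K_S)⁻¹ K_Sᴴ k_j`. -/
def ercVec {L N : ℕ} (K : Matrix (Fin L) (Fin N) ℂ) (S : Finset (Fin N)) (j : Fin N) :
    {i : Fin N // i ∈ S} → ℂ := ((gram K S)⁻¹ * (subMat K S)ᴴ) *ᵥ _root_.col K j

/-- The ℓ1 norm of a complex vector, as a real number. -/
def l1 {ι : Type} [Fintype ι] (v : ι → ℂ) : ℝ := ∑ i, ‖v i‖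

/-- The ℓ1 norm of a complex vector, as a nonnegative real number. -/
def l1n {ι : Type} [Fintype ι] (v : ι → ℂ) : NNReal := ∑ i, ‖v i‖₊

/-- key OMP step of Lemma 1: if `K_Sᴴ K_S` is invertible then, for
every `r` in the column space of `K_S` and every `j ∉ S`,
`|⟨k_j, r⟩| ≤ M · max_{i ∈ S} |⟨k_i, r⟩|`, where
`M = max_{l ∉ S} ‖(K_Sᴴ K_S)⁻¹ K_Sᴴ k_l‖₁`. -/
theorem stmt1 (L N : ℕ) (hL : 1 ≤ L) (hN : 1 ≤ N)
    (K : Matrix (Fin L) (Fin N) ℂ)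
    (hunit : ∀ j : Fin N, ∑ l, ‖K l j‖ ^ 2 = 1)
    (S : Finset (Fin N))
    (hinv : IsUnit (gram K S))
    (M : ℝ) (hM : M = ((Sᶜ.sup fun l => l1n (ercVec K S l) : NNReal) : ℝ))
    (r : Fin L → ℂ) (hr : ∃ c : {i : Fin N // i ∈ S} → ℂ, r = subMat K S *ᵥ c)
    (j : Fin N) (hj : j ∉ S) :
    ‖ipC (_root_.col K j) r‖ ≤ M * ((S.sup fun i => ‖ipC (_root_.col K i) r‖₊ : NNReal) : ℝ) := by

  obtain ⟨c, rfl⟩ := hr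
  set G := gram K S with hG
  have hGH : Gᴴ = G := by
    simp [hG, _root_.gram, Matrix.conjTranspose_mul]
  have hdet : IsUnit G.det := (Matrix.isUnit_iff_isUnit_det G).mp hinv
  set w := ercVec K S j with hw
  have hGw : G *ᵥ w = (subMat K S)ᴴ *ᵥ _root_.col K j := by
    rw [hw, ercVec, Matrix.mulVec_mulVec, ← hG, ← Matrix.mul_assoc,
      Matrix.mul_nonsing_inv _ hdet, Matrix.one_mul]
  have hip : ∀ (u v : Fin L → ℂ), ipC u v = star u ⬝ᵥ v := fun u v => rfl
  have h1 : ipC (_root_.col K j) (subMat K S *ᵥ c) = star (G *ᵥ w) ⬝ᵥ c := by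
    rw [hGw, Matrix.star_mulVec, Matrix.conjTranspose_conjTranspose, hip,
      Matrix.dotProduct_mulVec]
  have h2 : star (G *ᵥ w) ⬝ᵥ c = star w ⬝ᵥ (G *ᵥ c) := by
    rw [Matrix.star_mulVec, hGH, ← Matrix.dotProduct_mulVec]
  have hipi : ∀ i : {i : Fin N // i ∈ S},
      ipC (_root_.col K i.1) (subMat K S *ᵥ c) = (G *ᵥ c) i := by
    intro i
    rw [hG, _root_.gram, ← Matrix.mulVec_mulVec]
    simp [ipC, Matrix.mulVec, dotProduct, Matrix.conjTranspose_apply, subMat, _root_.col]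
  have key : ipC (_root_.col K j) (subMat K S *ᵥ c)
      = ∑ i : {i : Fin N // i ∈ S}, star (w i) * ipC (_root_.col K i.1) (subMat K S *ᵥ c) := by
    rw [h1, h2]
    simp only [hipi]
    rfl
  set B : ℝ := ((S.sup fun i => ‖ipC (_root_.col K i) (subMat K S *ᵥ c)‖₊ : NNReal) : ℝ) with hB
  have hBnn : 0 ≤ B := NNReal.coe_nonneg _
  have hbound : ∀ i : {i : Fin N // i ∈ S}, ‖ipC (_root_.col K i.1) (subMat K S *ᵥ c)‖ ≤ B := by
    intro i
    have := Finset.le_sup (f := fun i => ‖ipC (_root_.col K i) (subMat K S *ᵥ c)‖₊) i.2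
    exact_mod_cast this
  have hl1 : (∑ i, ‖w i‖) ≤ M := by
    have h := Finset.le_sup (f := fun l => l1n (ercVec K S l)) (Finset.mem_compl.mpr hj)
    rw [hM]
    have : ((l1n w : NNReal) : ℝ) ≤ _ := NNReal.coe_le_coe.mpr h
    calc (∑ i, ‖w i‖) = ((l1n w : NNReal) : ℝ) := by
          simp [l1n, NNReal.coe_sum]
      _ ≤ _ := this
  calc ‖ipC (_root_.col K j) (subMat K S *ᵥ c)‖
      = ‖∑ i : {i : Fin N // i ∈ S}, star (w i) * ipC (_root_.col K i.1) (subMat K S *ᵥ c)‖ := by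
        rw [key]
    _ ≤ ∑ i : {i : Fin N // i ∈ S}, ‖star (w i) * ipC (_root_.col K i.1) (subMat K S *ᵥ c)‖ :=
        norm_sum_le _ _
    _ ≤ ∑ i : {i : Fin N // i ∈ S}, ‖w i‖ * B := by
        refine Finset.sum_le_sum fun i _ => ?_
        rw [norm_mul, norm_star]
        exact mul_le_mul_of_nonneg_left (hbound i) (norm_nonneg _)
    _ = (∑ i, ‖w i‖) * B := by rw [Finset.sum_mul]
    _ ≤ M * B := mul_le_mul_of_nonneg_right hl1 hBnn
end
end

section
/- Suppose the intra-coherence of S satisfies ν_S < 1. Then the Gram matrix K_S^H K_S is invertible and for every index j ∉ S, ‖(K_S^H K_S)^{-1} K_S^H k_j‖₁ ≤ ζ_S/(1 − ν_S); that is, the exact-recovery constant of the support set S is at most ζ_S/(1 − ν_S). -/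
open Matrix Finset

noncomputable section

lemma ipC_norm_symm {L : ℕ} (u v : Fin L → ℂ) : ‖ipC u v‖ = ‖ipC v u‖ := by
  have h : ipC v u = star (ipC u v) := by
    simp only [ipC, star_sum]
    exact Finset.sum_congr rfl fun l _ => by rw [star_mul', star_star]; ring
  rw [h, norm_star]

lemma star_mul_self_eq {z : ℂ} : star z * z = ((‖z‖ ^ 2 : ℝ) : ℂ) := by
  rw [show (star z) = (starRingEnd ℂ) z from rfl, ← Complex.normSq_eq_conj_mul_self]
  norm_cast
  rw [Complex.normSq_eq_norm_sq]

/-- equation (32), the main intermediate bound of Theorem 1: if the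
intra-coherence `ν_S < 1`, then `K_Sᴴ K_S` is invertible and for every `j ∉ S`,
`‖(K_Sᴴ K_S)⁻¹ K_Sᴴ k_j‖₁ ≤ ζ_S / (1 - ν_S)`, where
`ζ_S = max_{i ∉ S} ∑_{j ∈ S} |⟨k_i, k_j⟩|` is the inter-coherence. -/
theorem stmt4 (L N : ℕ) (hL : 1 ≤ L) (hN : 1 ≤ N)
    (K : Matrix (Fin L) (Fin N) ℂ)
    (hunit : ∀ j : Fin N, ∑ l, ‖K l j‖ ^ 2 = 1)
    (S : Finset (Fin N))
    (ζ : ℝ)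
    (hζ : ζ = ((Sᶜ.sup fun i => ∑ j ∈ S, ‖ipC (_root_.col K i) (_root_.col K j)‖₊ : NNReal) : ℝ))
    (ν : ℝ)
    (hν : ν = ((S.sup fun i => ∑ j ∈ S.erase i, ‖ipC (_root_.col K i) (_root_.col K j)‖₊ : NNReal) : ℝ))
    (hν1 : ν < 1) :
    IsUnit (gram K S) ∧
    ∀ j ∉ S, l1 (ercVec K S j) ≤ ζ / (1 - ν) := by
  classical
  set G := gram K S with hGdef
  have hGapp : ∀ i m : {j : Fin N // j ∈ S}, G i m = ipC (_root_.col K i.1) (_root_.col K m.1) := by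
    intro i m
    simp [hGdef, _root_.gram, subMat, ipC, _root_.col, Matrix.mul_apply, Matrix.conjTranspose_apply]
  have hdiag : ∀ i : {j : Fin N // j ∈ S}, G i i = 1 := by
    intro i
    have h : G i i = ((∑ l, ‖K l i.1‖ ^ 2 : ℝ) : ℂ) := by
      rw [hGapp]
      simp only [ipC, _root_.col, star_mul_self_eq]
      norm_cast
    rw [h, hunit]
    norm_num
  -- off-diagonal part
  set E : Matrix {j : Fin N // j ∈ S} {j : Fin N // j ∈ S} ℂ :=
    fun i m => if i = m then 0 else G i m with hEdef
  have hGE : ∀ i m, G i m = (1 : Matrix _ _ ℂ) i m + E i m := by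
    intro i m
    by_cases h : i = m
    · subst h; simp [hEdef, Matrix.one_apply, hdiag]
    · simp [hEdef, Matrix.one_apply, h]
  have hν0 : 0 ≤ ν := by rw [hν]; exact NNReal.coe_nonneg _
  -- row sums of |E| are at most ν
  have hrow : ∀ i : {j : Fin N // j ∈ S}, ∑ m, ‖E i m‖ ≤ ν := by
    intro i
    set g : Fin N → ℝ := fun j' =>
      if j' = i.1 then 0 else ‖ipC (_root_.col K i.1) (_root_.col K j')‖ with hgdef
    have h1 : ∀ m : {j : Fin N // j ∈ S}, ‖E i m‖ = g m.1 := by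
      intro m
      by_cases h : i = m
      · subst h; simp [hEdef, hgdef]
      · have h' : m.1 ≠ i.1 := fun hc => h (Subtype.ext hc.symm)
        simp only [hEdef, hgdef, if_neg h, if_neg h']
        rw [hGapp]
    have h2 : ∑ m, ‖E i m‖ = ∑ j' ∈ S, g j' := by
      rw [Finset.sum_congr rfl fun m _ => h1 m]
      exact Finset.sum_coe_sort S g
    have h3 : ∑ j' ∈ S, g j' = ∑ j' ∈ S.erase i.1, ‖ipC (_root_.col K i.1) (_root_.col K j')‖ := by
      rw [← Finset.add_sum_erase S g i.2]
      have hg0 : g i.1 = 0 := by simp [hgdef]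
      rw [hg0, zero_add]
      exact Finset.sum_congr rfl fun j' hj' => by
        simp [hgdef, Finset.ne_of_mem_erase hj']
    have h4 : (((∑ j' ∈ S.erase i.1, ‖ipC (_root_.col K i.1) (_root_.col K j')‖₊ : NNReal)) : ℝ)
        = ∑ j' ∈ S.erase i.1, ‖ipC (_root_.col K i.1) (_root_.col K j')‖ := by
      push_cast; rfl
    have h5 : (∑ j' ∈ S.erase i.1, ‖ipC (_root_.col K i.1) (_root_.col K j')‖₊ : NNReal)
        ≤ S.sup fun i' => ∑ j' ∈ S.erase i', ‖ipC (_root_.col K i') (_root_.col K j')‖₊ :=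
      Finset.le_sup (f := fun i' => ∑ j' ∈ S.erase i', ‖ipC (_root_.col K i') (_root_.col K j')‖₊) i.2
    rw [h2, h3, ← h4, hν]
    exact_mod_cast h5
  -- column sums of |E| are at most ν
  have hEsymm : ∀ i m, ‖E i m‖ = ‖E m i‖ := by
    intro i m
    by_cases h : i = m
    · subst h; rfl
    · have h' : m ≠ i := fun hc => h hc.symm
      simp only [hEdef, if_neg h, if_neg h', hGapp]
      exact ipC_norm_symm _ _
  have hcol : ∀ m : {j : Fin N // j ∈ S}, ∑ i, ‖E i m‖ ≤ ν := by
    intro m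
    calc ∑ i, ‖E i m‖ = ∑ i, ‖E m i‖ := Finset.sum_congr rfl fun i _ => hEsymm i m
    _ ≤ ν := hrow m
  -- key inequality : if G *ᵥ x = b then l1 x ≤ l1 b + ν * l1 x
  have key : ∀ x b : {j : Fin N // j ∈ S} → ℂ, G *ᵥ x = b → l1 x ≤ l1 b + ν * l1 x := by
    intro x b hxb
    have hGx : ∀ i, x i = b i - (E *ᵥ x) i := by
      intro i
      have hG1 : G = 1 + E := by ext i m; exact hGE i m
      have h : (G *ᵥ x) i = x i + (E *ᵥ x) i := by
        rw [hG1, Matrix.add_mulVec, Matrix.one_mulVec]; rfl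
      rw [hxb] at h
      exact (eq_sub_iff_add_eq).2 h.symm
    have hstep : ∀ i, ‖x i‖ ≤ ‖b i‖ + ∑ m, ‖E i m‖ * ‖x m‖ := by
      intro i
      calc ‖x i‖ = ‖b i - (E *ᵥ x) i‖ := by rw [← hGx i]
      _ ≤ ‖b i‖ + ‖(E *ᵥ x) i‖ := norm_sub_le _ _
      _ ≤ ‖b i‖ + ∑ m, ‖E i m‖ * ‖x m‖ := by
          gcongr
          calc ‖(E *ᵥ x) i‖ = ‖∑ m, E i m * x m‖ := rfl
          _ ≤ ∑ m, ‖E i m * x m‖ := norm_sum_le _ _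
          _ = ∑ m, ‖E i m‖ * ‖x m‖ := by simp [norm_mul]
    calc l1 x = ∑ i, ‖x i‖ := rfl
    _ ≤ ∑ i, (‖b i‖ + ∑ m, ‖E i m‖ * ‖x m‖) := Finset.sum_le_sum fun i _ => hstep i
    _ = l1 b + ∑ m, (∑ i, ‖E i m‖) * ‖x m‖ := by
        rw [Finset.sum_add_distrib, Finset.sum_comm]
        simp [l1, Finset.sum_mul]
    _ ≤ l1 b + ∑ m, ν * ‖x m‖ := by
        refine add_le_add_right (Finset.sum_le_sum fun m _ => ?_) _
        exact mul_le_mul_of_nonneg_right (hcol m) (norm_nonneg _)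
    _ = l1 b + ν * l1 x := by rw [← Finset.mul_sum]; rfl
  -- invertibility
  have hdet : G.det ≠ 0 := by
    intro hdet0
    obtain ⟨v, hv0, hGv⟩ := (Matrix.exists_mulVec_eq_zero_iff).2 hdet0
    have hkey := key v 0 hGv
    have hl10 : l1 (0 : {j : Fin N // j ∈ S} → ℂ) = 0 := by simp [l1]
    rw [hl10, zero_add] at hkey
    have hpos : 0 < l1 v := by
      obtain ⟨i, hi⟩ := Function.ne_iff.1 hv0
      have h1 : 0 < ‖v i‖ := norm_pos_iff.2 hi
      have h2 : ‖v i‖ ≤ l1 v :=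
        Finset.single_le_sum (fun m _ => norm_nonneg (v m)) (Finset.mem_univ i)
      linarith
    nlinarith
  have hunitG : IsUnit G := (Matrix.isUnit_iff_isUnit_det G).2 (isUnit_iff_ne_zero.2 hdet)
  refine ⟨hunitG, ?_⟩
  intro j hj
  set x := ercVec K S j with hxdef
  set b : {i : Fin N // i ∈ S} → ℂ := (subMat K S)ᴴ *ᵥ _root_.col K j with hbdef
  have hGx : G *ᵥ x = b := by
    rw [hxdef]
    show G *ᵥ ((G⁻¹ * (subMat K S)ᴴ) *ᵥ _root_.col K j) = b
    rw [Matrix.mulVec_mulVec, ← Matrix.mul_assoc,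
      Matrix.mul_nonsing_inv G (isUnit_iff_ne_zero.2 hdet), Matrix.one_mul]
  have hb : l1 b ≤ ζ := by
    have hb1 : ∀ i : {i : Fin N // i ∈ S}, ‖b i‖ = ‖ipC (_root_.col K j) (_root_.col K i.1)‖ := by
      intro i
      have hbe : b i = ipC (_root_.col K i.1) (_root_.col K j) := by
        simp [hbdef, Matrix.mulVec, Matrix.conjTranspose_apply, subMat, ipC, _root_.col, dotProduct]
      rw [hbe]; exact ipC_norm_symm _ _
    have h2 : l1 b = ∑ i ∈ S, ‖ipC (_root_.col K j) (_root_.col K i)‖ := by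
      rw [l1, Finset.sum_congr rfl fun i _ => hb1 i]
      exact Finset.sum_coe_sort S fun i => ‖ipC (_root_.col K j) (_root_.col K i)‖
    have h4 : (((∑ i ∈ S, ‖ipC (_root_.col K j) (_root_.col K i)‖₊ : NNReal)) : ℝ)
        = ∑ i ∈ S, ‖ipC (_root_.col K j) (_root_.col K i)‖ := by push_cast; rfl
    have h5 : (∑ i ∈ S, ‖ipC (_root_.col K j) (_root_.col K i)‖₊ : NNReal)
        ≤ Sᶜ.sup fun i' => ∑ i ∈ S, ‖ipC (_root_.col K i') (_root_.col K i)‖₊ :=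
      Finset.le_sup (f := fun i' => ∑ i ∈ S, ‖ipC (_root_.col K i') (_root_.col K i)‖₊)
        (Finset.mem_compl.2 hj)
    rw [h2, ← h4, hζ]
    exact_mod_cast h5
  have hkey := key x b hGx
  have h1ν : 0 < 1 - ν := by linarith
  rw [le_div_iff₀ h1ν]
  nlinarith
end
end

section
/- Suppose 2·Σ_{j=1}^m ζ_j + max_{j} ν_j − min_{j} ζ_j < 1. Then every x ∈ ℂ^N supported on the union S = S_1 ∪ … ∪ S_m is the unique ℓ1 minimizer for the observation y = Kx; that is, basis pursuit exactly recovers the sparse representation of any periodic mixture whose hidden periods correspond to the sets S_1,…,S_m. -/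
open Matrix Finset

noncomputable section

/-- Bounding a sum over a `biUnion` by the sum of sums, for nonnegative weights. -/
lemma stmt7_aux_biUnion_le {α β : Type*} [DecidableEq α] [DecidableEq β]
    (s : Finset α) (t : α → Finset β) (f : β → ℝ) (hf : ∀ b, 0 ≤ f b) :
    ∑ i ∈ s.biUnion t, f i ≤ ∑ a ∈ s, ∑ i ∈ t a, f i := by
  induction s using Finset.induction with
  | empty => simp
  | @insert a s h ih =>
    rw [Finset.biUnion_insert, Finset.sum_insert h]
    have h1 : ∑ i ∈ t a ∪ s.biUnion t, f i ≤ ∑ i ∈ t a, f i + ∑ i ∈ s.biUnion t, f i := by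
      rw [← Finset.sum_union_inter]
      have : (0:ℝ) ≤ ∑ i ∈ t a ∩ s.biUnion t, f i := Finset.sum_nonneg fun i _ => hf i
      linarith
    linarith

/-- Columns of unit norm have unit self inner product. -/
lemma stmt7_aux_ipC_self {L N : ℕ} (K : Matrix (Fin L) (Fin N) ℂ)
    (hunit : ∀ j : Fin N, ∑ l, ‖K l j‖ ^ 2 = 1) (i : Fin N) :
    ipC (_root_.col K i) (_root_.col K i) = 1 := by
  have : ipC (_root_.col K i) (_root_.col K i) = ((∑ l, ‖K l i‖^2 : ℝ) : ℂ) := by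
    push_cast
    refine Finset.sum_congr rfl fun l _ => ?_
    rw [_root_.col, Complex.star_def, mul_comm, Complex.mul_conj']
  rw [this, hunit]; simp

/-- Hermitian symmetry of the inner product, at the level of norms. -/
lemma stmt7_aux_ipC_symm {L : ℕ} (u v : Fin L → ℂ) : ‖ipC v u‖ = ‖ipC u v‖ := by
  have : ipC v u = star (ipC u v) := by simp [ipC, star_sum, mul_comm]
  rw [this, norm_star]

/-- Rows of the Gram system annihilate null vectors. -/
lemma stmt7_aux_row {L N : ℕ} (K : Matrix (Fin L) (Fin N) ℂ) (h : Fin N → ℂ)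
    (hKh : K *ᵥ h = 0) (i : Fin N) : ∑ l, ipC (_root_.col K i) (_root_.col K l) * h l = 0 := by
  simp only [ipC, _root_.col, Finset.sum_mul]
  rw [Finset.sum_comm]
  have hv : ∀ t, ∑ l, K t l * h l = 0 := fun t => congrFun hKh t
  simp only [mul_assoc, ← Finset.mul_sum]
  simp [hv]

/-- Theorem 2, basis-pursuit recovery for mixtures: for index sets
`S_1, …, S_m` with union `S` and restricted coherences `ζ_j`, `ν_j`, if
`2 ∑_j ζ_j + max_j ν_j - min_j ζ_j < 1`, then every `x` supported on `S` is the unique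
ℓ1 minimizer for the observation `y = K x`. -/
theorem stmt7 (L N m : ℕ) (hL : 1 ≤ L) (hN : 1 ≤ N) (hm : 1 ≤ m)
    (K : Matrix (Fin L) (Fin N) ℂ)
    (hunit : ∀ j : Fin N, ∑ l, ‖K l j‖ ^ 2 = 1)
    (Ssets : Fin m → Finset (Fin N))
    (S : Finset (Fin N)) (hS : S = Finset.univ.biUnion Ssets)
    (ζ ν : Fin m → ℝ)
    (hζ : ∀ j, ζ j =
      (((Ssets j)ᶜ.sup fun i => ∑ l ∈ Ssets j, ‖ipC (_root_.col K i) (_root_.col K l)‖₊ : NNReal) : ℝ))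
    (hν : ∀ j, ν j =
      (((Ssets j).sup fun i => ∑ l ∈ (Ssets j).erase i, ‖ipC (_root_.col K i) (_root_.col K l)‖₊ : NNReal) : ℝ))
    (h1 : 2 * (∑ j, ζ j)
        + Finset.univ.sup' (Finset.univ_nonempty_iff.mpr ⟨⟨0, hm⟩⟩) ν
        - Finset.univ.inf' (Finset.univ_nonempty_iff.mpr ⟨⟨0, hm⟩⟩) ζ < 1) :
    ∀ x : Fin N → ℂ, (∀ j ∉ S, x j = 0) →
      ∀ z : Fin N → ℂ, K *ᵥ z = K *ᵥ x → z ≠ x → l1 x < l1 z := by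
  classical
  intro x hx z hKz hne
  set h : Fin N → ℂ := fun i => z i - x i with hh
  have hKh : K *ᵥ h = 0 := by
    have : K *ᵥ (z - x) = 0 := by rw [Matrix.mulVec_sub, hKz, sub_self]
    simpa [hh, Pi.sub_def] using this
  set a : Fin N → ℝ := fun i => ‖h i‖ with ha
  have ha0 : ∀ i, 0 ≤ a i := fun i => norm_nonneg _
  -- row inequality
  have hrow : ∀ i, a i ≤ ∑ l ∈ Finset.univ.erase i,
      ‖ipC (_root_.col K i) (_root_.col K l)‖ * a l := by
    intro i
    have h0 := stmt7_aux_row K h hKh i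
    have hsplit : ipC (_root_.col K i) (_root_.col K i) * h i
        + ∑ l ∈ Finset.univ.erase i, ipC (_root_.col K i) (_root_.col K l) * h l = 0 :=
      (Finset.add_sum_erase Finset.univ (fun l => ipC (_root_.col K i) (_root_.col K l) * h l)
        (Finset.mem_univ i)).trans h0
    rw [stmt7_aux_ipC_self K hunit i, one_mul] at hsplit
    have : h i = -∑ l ∈ Finset.univ.erase i, ipC (_root_.col K i) (_root_.col K l) * h l := by
      linear_combination hsplit
    calc a i = ‖∑ l ∈ Finset.univ.erase i, ipC (_root_.col K i) (_root_.col K l) * h l‖ := by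
          rw [ha]; simp only []; rw [this, norm_neg]
    _ ≤ ∑ l ∈ Finset.univ.erase i, ‖ipC (_root_.col K i) (_root_.col K l) * h l‖ :=
          norm_sum_le _ _
    _ = ∑ l ∈ Finset.univ.erase i, ‖ipC (_root_.col K i) (_root_.col K l)‖ * a l := by
          refine Finset.sum_congr rfl fun l _ => ?_; rw [norm_mul]
  -- coherence bounds
  have hζ0 : ∀ j, 0 ≤ ζ j := fun j => by rw [hζ j]; positivity
  have hν0 : ∀ j, 0 ≤ ν j := fun j => by rw [hν j]; positivity
  have hζle : ∀ j, ∀ l ∉ Ssets j, ∑ i ∈ Ssets j, ‖ipC (_root_.col K l) (_root_.col K i)‖ ≤ ζ j := by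
    intro j l hl
    rw [hζ j]
    have h2 : (∑ i ∈ Ssets j, ‖ipC (_root_.col K l) (_root_.col K i)‖₊ : NNReal)
        ≤ (Ssets j)ᶜ.sup fun i => ∑ l' ∈ Ssets j, ‖ipC (_root_.col K i) (_root_.col K l')‖₊ :=
      Finset.le_sup (f := fun i => ∑ l' ∈ Ssets j, ‖ipC (_root_.col K i) (_root_.col K l')‖₊)
        (Finset.mem_compl.mpr hl)
    calc ∑ i ∈ Ssets j, ‖ipC (_root_.col K l) (_root_.col K i)‖
        = ((∑ i ∈ Ssets j, ‖ipC (_root_.col K l) (_root_.col K i)‖₊ : NNReal) : ℝ) := by push_cast; rfl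
    _ ≤ _ := NNReal.coe_le_coe.mpr h2
  have hνle : ∀ j, ∀ l ∈ Ssets j,
      ∑ i ∈ (Ssets j).erase l, ‖ipC (_root_.col K l) (_root_.col K i)‖ ≤ ν j := by
    intro j l hl
    rw [hν j]
    have h2 : (∑ i ∈ (Ssets j).erase l, ‖ipC (_root_.col K l) (_root_.col K i)‖₊ : NNReal)
        ≤ (Ssets j).sup fun i => ∑ l' ∈ (Ssets j).erase i, ‖ipC (_root_.col K i) (_root_.col K l')‖₊ :=
      Finset.le_sup (f := fun i => ∑ l' ∈ (Ssets j).erase i, ‖ipC (_root_.col K i) (_root_.col K l')‖₊) hl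
    calc ∑ i ∈ (Ssets j).erase l, ‖ipC (_root_.col K l) (_root_.col K i)‖
        = ((∑ i ∈ (Ssets j).erase l, ‖ipC (_root_.col K l) (_root_.col K i)‖₊ : NNReal) : ℝ) := by
          push_cast; rfl
    _ ≤ _ := NNReal.coe_le_coe.mpr h2
  -- per-block inequality
  have key : ∀ j, ∑ i ∈ Ssets j, a i
      ≤ ν j * (∑ i ∈ Ssets j, a i) + ζ j * (∑ i ∈ (Ssets j)ᶜ, a i) := by
    intro j
    have hsplitset : ∀ i ∈ Ssets j,
        (Finset.univ.erase i : Finset (Fin N)) = (Ssets j).erase i ∪ (Ssets j)ᶜ := by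
      intro i hi
      ext l
      simp only [Finset.mem_erase, Finset.mem_union, Finset.mem_univ, and_true,
        Finset.mem_compl]
      constructor
      · intro hne'
        by_cases hls : l ∈ Ssets j
        · exact Or.inl ⟨hne', hls⟩
        · exact Or.inr hls
      · rintro (⟨hne', _⟩ | hls)
        · exact hne'
        · intro heq; exact hls (heq ▸ hi)
    have hdisj : ∀ i : Fin N, Disjoint ((Ssets j).erase i) ((Ssets j)ᶜ) :=
      fun i => Disjoint.mono_left (Finset.erase_subset i _) disjoint_compl_right
    calc ∑ i ∈ Ssets j, a i
        ≤ ∑ i ∈ Ssets j, ∑ l ∈ Finset.univ.erase i, ‖ipC (_root_.col K i) (_root_.col K l)‖ * a l :=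
          Finset.sum_le_sum fun i _ => hrow i
    _ = ∑ i ∈ Ssets j, ((∑ l ∈ (Ssets j).erase i, ‖ipC (_root_.col K i) (_root_.col K l)‖ * a l)
          + ∑ l ∈ (Ssets j)ᶜ, ‖ipC (_root_.col K i) (_root_.col K l)‖ * a l) := by
          refine Finset.sum_congr rfl fun i hi => ?_
          rw [hsplitset i hi, Finset.sum_union (hdisj i)]
    _ = (∑ i ∈ Ssets j, ∑ l ∈ (Ssets j).erase i, ‖ipC (_root_.col K i) (_root_.col K l)‖ * a l)
          + ∑ i ∈ Ssets j, ∑ l ∈ (Ssets j)ᶜ, ‖ipC (_root_.col K i) (_root_.col K l)‖ * a l :=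
          Finset.sum_add_distrib
    _ ≤ ν j * (∑ i ∈ Ssets j, a i) + ζ j * (∑ i ∈ (Ssets j)ᶜ, a i) := by
          gcongr ?_ + ?_
          · -- ν term
            have hswap : (∑ i ∈ Ssets j, ∑ l ∈ (Ssets j).erase i,
                ‖ipC (_root_.col K i) (_root_.col K l)‖ * a l)
                = ∑ l ∈ Ssets j, ∑ i ∈ (Ssets j).erase l,
                    ‖ipC (_root_.col K i) (_root_.col K l)‖ * a l := by
              refine Finset.sum_comm' fun p q => ?_
              simp only [Finset.mem_erase]
              constructor
              · rintro ⟨hp, hqp, hq⟩; exact ⟨⟨fun e => hqp e.symm, hp⟩, hq⟩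
              · rintro ⟨⟨hpq, hp⟩, hq⟩; exact ⟨hp, fun e => hpq e.symm, hq⟩
            rw [hswap, Finset.mul_sum]
            refine Finset.sum_le_sum fun l hl => ?_
            have : ∑ i ∈ (Ssets j).erase l, ‖ipC (_root_.col K i) (_root_.col K l)‖ * a l
                = (∑ i ∈ (Ssets j).erase l, ‖ipC (_root_.col K l) (_root_.col K i)‖) * a l := by
              rw [Finset.sum_mul]
              refine Finset.sum_congr rfl fun i _ => ?_
              rw [stmt7_aux_ipC_symm]
            rw [this]
            exact mul_le_mul_of_nonneg_right (hνle j l hl) (ha0 l)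
          · -- ζ term
            rw [Finset.sum_comm, Finset.mul_sum]
            refine Finset.sum_le_sum fun l hl => ?_
            have hlmem : l ∉ Ssets j := Finset.mem_compl.mp hl
            have : ∑ i ∈ Ssets j, ‖ipC (_root_.col K i) (_root_.col K l)‖ * a l
                = (∑ i ∈ Ssets j, ‖ipC (_root_.col K l) (_root_.col K i)‖) * a l := by
              rw [Finset.sum_mul]
              refine Finset.sum_congr rfl fun i _ => ?_
              rw [stmt7_aux_ipC_symm]
            rw [this]
            exact mul_le_mul_of_nonneg_right (hζle j l hlmem) (ha0 l)
  -- arithmetic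
  set MX := Finset.univ.sup' (Finset.univ_nonempty_iff.mpr ⟨⟨0, hm⟩⟩) ν with hMXdef
  set MN := Finset.univ.inf' (Finset.univ_nonempty_iff.mpr ⟨⟨0, hm⟩⟩) ζ with hMNdef
  have hMX : ∀ j, ν j ≤ MX := fun j => Finset.le_sup' ν (Finset.mem_univ j)
  have hMN : ∀ j, MN ≤ ζ j := fun j => Finset.inf'_le ζ (Finset.mem_univ j)
  set T := ∑ i, a i with hT
  have hsum0 : (0:ℝ) ≤ ∑ j, ζ j := Finset.sum_nonneg fun j _ => hζ0 j
  have hD : 0 < 1 - MX + MN := by linarith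
  have hblock : ∀ j, (1 - MX + MN) * (∑ i ∈ Ssets j, a i) ≤ ζ j * T := by
    intro j
    have hk := key j
    have hA0 : (0:ℝ) ≤ ∑ i ∈ Ssets j, a i := Finset.sum_nonneg fun i _ => ha0 i
    have hcompl : ∑ i ∈ (Ssets j)ᶜ, a i = T - ∑ i ∈ Ssets j, a i := by
      have := Finset.sum_add_sum_compl (Ssets j) a
      linarith
    rw [hcompl] at hk
    nlinarith [mul_nonneg (sub_nonneg.mpr (hMX j)) hA0,
      mul_nonneg (sub_nonneg.mpr (hMN j)) hA0]
  have hSa : ∑ i ∈ S, a i ≤ ∑ j, ∑ i ∈ Ssets j, a i := by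
    rw [hS]; exact stmt7_aux_biUnion_le _ _ _ ha0
  have hDS : (1 - MX + MN) * (∑ i ∈ S, a i) ≤ (∑ j, ζ j) * T := by
    calc (1 - MX + MN) * (∑ i ∈ S, a i) ≤ (1 - MX + MN) * ∑ j, ∑ i ∈ Ssets j, a i :=
          mul_le_mul_of_nonneg_left hSa hD.le
    _ = ∑ j, (1 - MX + MN) * ∑ i ∈ Ssets j, a i := Finset.mul_sum _ _ _
    _ ≤ ∑ j, ζ j * T := Finset.sum_le_sum fun j _ => hblock j
    _ = (∑ j, ζ j) * T := (Finset.sum_mul _ _ _).symm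
  have hT0 : 0 < T := by
    have hne' : h ≠ 0 := by
      intro h0
      apply hne
      funext i
      have := congrFun h0 i
      simp only [hh, Pi.zero_apply] at this
      exact sub_eq_zero.mp this
    obtain ⟨i, hi⟩ := Function.ne_iff.mp hne'
    have : 0 < a i := by simpa [ha] using norm_pos_iff.mpr hi
    have hle : a i ≤ T := Finset.single_le_sum (fun i _ => ha0 i) (Finset.mem_univ i)
    linarith
  have hPQ : ∑ i ∈ S, a i < ∑ i ∈ Sᶜ, a i := by
    have hsum : ∑ i ∈ S, a i + ∑ i ∈ Sᶜ, a i = T := Finset.sum_add_sum_compl S a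
    have h2 : 2 * (∑ j, ζ j) < 1 - MX + MN := by linarith
    have h3 : (2 * (∑ j, ζ j)) * T < (1 - MX + MN) * T :=
      mul_lt_mul_of_pos_right h2 hT0
    nlinarith
  -- conclusion
  have hzc : ∑ i ∈ Sᶜ, ‖z i‖ = ∑ i ∈ Sᶜ, a i := by
    refine Finset.sum_congr rfl fun i hi => ?_
    have hxi : x i = 0 := hx i (Finset.mem_compl.mp hi)
    simp [ha, hh, hxi]
  have hzS : ∀ i ∈ S, ‖x i‖ - a i ≤ ‖z i‖ := by
    intro i _
    have h4 : ‖x i‖ - ‖z i‖ ≤ ‖x i - z i‖ := norm_sub_norm_le _ _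
    have h5 : ‖x i - z i‖ = a i := by rw [ha]; simp only [hh]; rw [norm_sub_rev]
    linarith
  have hl1z : l1 z = ∑ i ∈ S, ‖z i‖ + ∑ i ∈ Sᶜ, a i := by
    rw [l1, ← Finset.sum_add_sum_compl S fun i => ‖z i‖, hzc]
  have hl1x : l1 x = ∑ i ∈ S, ‖x i‖ := by
    rw [l1, ← Finset.sum_add_sum_compl S fun i => ‖x i‖]
    have : ∑ i ∈ Sᶜ, ‖x i‖ = 0 := by
      refine Finset.sum_eq_zero fun i hi => ?_
      rw [hx i (Finset.mem_compl.mp hi), norm_zero]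
    rw [this, add_zero]
  have hlow : ∑ i ∈ S, ‖x i‖ - ∑ i ∈ S, a i ≤ ∑ i ∈ S, ‖z i‖ := by
    rw [← Finset.sum_sub_distrib]
    exact Finset.sum_le_sum hzS
  rw [hl1x, hl1z]
  linarith
end
end
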